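/- Let H = ℓ²(ℕ × ℤ; ℂ) with standard orthonormal basis (δ_{n,k})_{n ∈ ℕ, k ∈ ℤ}. There exist bounded linear operators a, g on H such that for all n ∈ ℕ and k ∈ ℤ: a(δ_{n+1,k}) = √(1 − |q|^{2(n+1)})·δ_{n,k}, a(δ_{0,k}) = 0, and g(δ_{n,k}) = conj(q)^n·δ_{n,k+1}; moreover any such a, g satisfy the SU_q(2) relations: a*a + g*g = 1, aa* + |q|²g*g = 1, ag = conj(q)·ga, and gg* = g*g. -/

import Mathlib

open scoped ComplexConjugate ENNReal

namespace SUq15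






variable {ι : Type*}

lemma two_toReal : (2 : ℝ≥0∞).toReal = 2 := by norm_num

/-- Summability + bound for weighted composition operators on ℓ². -/
lemma key_summable (w : ι → ℂ) (σ : ι → ι) (hw : ∀ i, ‖w i‖ ≤ 1)
    (hσ : Set.InjOn σ {i | w i ≠ 0}) (x : lp (fun _ : ι => ℂ) 2) :
    Summable (fun i => ‖w i * x (σ i)‖ ^ (2:ℝ)) ∧
      ∑' i, ‖w i * x (σ i)‖ ^ (2:ℝ) ≤ ∑' i, ‖x i‖ ^ (2:ℝ) := by
  set S : Set ι := {i | w i ≠ 0} with hS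
  set f : ι → ℝ := fun i => ‖w i * x (σ i)‖ ^ (2:ℝ) with hf
  set u : ι → ℝ := fun i => ‖x i‖ ^ (2:ℝ) with hu
  have husum : Summable u := by
    simpa [hu, two_toReal] using (lp.memℓp x).summable (p := 2) (by norm_num)
  have hf0 : ∀ i, 0 ≤ f i := fun i => Real.rpow_nonneg (norm_nonneg _) _
  have hu0 : ∀ i, 0 ≤ u i := fun i => Real.rpow_nonneg (norm_nonneg _) _
  have hfle : ∀ i, f i ≤ u (σ i) := by
    intro i
    apply Real.rpow_le_rpow (norm_nonneg _) ?_ (by norm_num)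
    calc ‖w i * x (σ i)‖ = ‖w i‖ * ‖x (σ i)‖ := norm_mul _ _
      _ ≤ 1 * ‖x (σ i)‖ := mul_le_mul_of_nonneg_right (hw i) (norm_nonneg _)
      _ = ‖x (σ i)‖ := one_mul _
  have hsupp : Function.support f ⊆ S := by
    intro i hi
    by_contra h
    simp only [hS, Set.mem_setOf_eq, not_not] at h
    apply hi
    simp [hf, h, Real.zero_rpow (by norm_num : (2:ℝ) ≠ 0)]
  have hinj : Function.Injective (fun j : S => σ j) := by
    intro a b hab
    exact Subtype.ext (hσ a.2 b.2 hab)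
  have hSsum : Summable (fun j : S => f j) :=
    Summable.of_nonneg_of_le (fun j => hf0 _) (fun j => hfle j)
      (husum.comp_injective hinj)
  have hfsum : Summable f := by
    have h2 : Summable (f ∘ (Subtype.val : S → ι)) := hSsum
    have := summable_subtype_iff_indicator.1 h2
    rwa [Set.indicator_eq_self.2 hsupp] at this
  refine ⟨hfsum, ?_⟩
  calc ∑' i, f i = ∑' j : S, f j := (tsum_subtype_eq_of_support_subset hsupp).symm
    _ ≤ ∑' i, u i := Summable.tsum_le_tsum_of_inj _ hinj (fun c _ => hu0 c)
        (fun j => hfle j) hSsum husum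

/-- Bounded weighted composition operator on ℓ². -/
noncomputable def mkOp (w : ι → ℂ) (σ : ι → ι) (hw : ∀ i, ‖w i‖ ≤ 1)
    (hσ : Set.InjOn σ {i | w i ≠ 0}) :
    lp (fun _ : ι => ℂ) 2 →L[ℂ] lp (fun _ : ι => ℂ) 2 :=
  LinearMap.mkContinuous
    { toFun := fun x => ⟨fun i => w i * x (σ i), memℓp_gen (by
        simpa [two_toReal] using (key_summable w σ hw hσ x).1)⟩
      map_add' := fun x y => by
        ext i
        simp [mul_add]
        rfl
      map_smul' := fun c x => by
        ext i
        simp [lp.coeFn_smul]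
        ring }
    1 (fun x => by
      rw [one_mul]
      refine lp.norm_le_of_tsum_le (by norm_num) (norm_nonneg _) ?_
      simp only [two_toReal]
      calc (∑' i, ‖w i * x (σ i)‖ ^ (2:ℝ)) ≤ ∑' i, ‖x i‖ ^ (2:ℝ) :=
            (key_summable w σ hw hσ x).2
        _ = ‖x‖ ^ (2:ℝ) := by
            simpa [two_toReal] using (lp.norm_rpow_eq_tsum (p := 2) (by norm_num) x).symm
      )

@[simp] lemma mkOp_apply (w : ι → ℂ) (σ : ι → ι) (hw : ∀ i, ‖w i‖ ≤ 1)
    (hσ : Set.InjOn σ {i | w i ≠ 0}) (x : lp (fun _ : ι => ℂ) 2) (i : ι) :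
    (mkOp w σ hw hσ x) i = w i * x (σ i) := rfl

noncomputable def c (q : ℂ) (n : ℕ) : ℝ := Real.sqrt (1 - ‖q‖ ^ (2 * n))

variable {q : ℂ}

lemma c_zero : c q 0 = 0 := by simp [c]

lemma pow_abs_le_one (hq1 : ‖q‖ < 1) (n : ℕ) : ‖q‖ ^ n ≤ 1 :=
  pow_le_one₀ (norm_nonneg q) hq1.le

lemma c_nonneg (n : ℕ) : 0 ≤ c q n := Real.sqrt_nonneg _

lemma c_le_one (n : ℕ) : c q n ≤ 1 := by
  refine Real.sqrt_le_one.2 ?_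
  have := pow_nonneg (norm_nonneg q) (2 * n)
  linarith

lemma c_sq (hq1 : ‖q‖ < 1) (n : ℕ) :
    (c q n) ^ 2 = 1 - ‖q‖ ^ (2 * n) := by
  refine Real.sq_sqrt ?_
  have := pow_abs_le_one hq1 (2 * n)
  linarith

lemma norm_c_coe (n : ℕ) : ‖((c q n : ℝ) : ℂ)‖ ≤ 1 := by
  rw [Complex.norm_real, Real.norm_of_nonneg (c_nonneg n)]
  exact c_le_one n

lemma c_ne_zero_imp {n : ℕ} (h : ((c q n : ℝ) : ℂ) ≠ 0) : n ≠ 0 := by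
  rintro rfl; simp [c_zero] at h

noncomputable abbrev H : Type := lp (fun _ : ℕ × ℤ => ℂ) 2

noncomputable def aOp (hq1 : ‖q‖ < 1) : H →L[ℂ] H :=
  mkOp (fun p => ((c q (p.1 + 1) : ℝ) : ℂ)) (fun p => (p.1 + 1, p.2))
    (fun p => norm_c_coe _)
    (fun p _ p' _ h => by
      obtain ⟨n, k⟩ := p; obtain ⟨n', k'⟩ := p'
      simpa [Prod.ext_iff] using h)

noncomputable def aAdjOp (hq1 : ‖q‖ < 1) : H →L[ℂ] H :=
  mkOp (fun p => ((c q p.1 : ℝ) : ℂ)) (fun p => (p.1 - 1, p.2))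
    (fun p => norm_c_coe _)
    (fun p hp p' hp' h => by
      obtain ⟨n, k⟩ := p; obtain ⟨n', k'⟩ := p'
      have h1 : n ≠ 0 := c_ne_zero_imp hp
      have h2 : n' ≠ 0 := c_ne_zero_imp hp'
      simp only [Prod.ext_iff] at h ⊢
      exact ⟨by omega, h.2⟩)

noncomputable def gOp (hq1 : ‖q‖ < 1) : H →L[ℂ] H :=
  mkOp (fun p => (conj q) ^ p.1) (fun p => (p.1, p.2 - 1))
    (fun p => by
      rw [norm_pow, RCLike.norm_conj]
      exact pow_le_one₀ (norm_nonneg q) hq1.le)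
    (fun p _ p' _ h => by
      obtain ⟨n, k⟩ := p; obtain ⟨n', k'⟩ := p'
      simp only [Prod.ext_iff] at h ⊢
      exact ⟨h.1, by omega⟩)

noncomputable def gAdjOp (hq1 : ‖q‖ < 1) : H →L[ℂ] H :=
  mkOp (fun p => q ^ p.1) (fun p => (p.1, p.2 + 1))
    (fun p => by rw [norm_pow]; exact pow_le_one₀ (norm_nonneg q) hq1.le)
    (fun p _ p' _ h => by
      obtain ⟨n, k⟩ := p; obtain ⟨n', k'⟩ := p'
      simp only [Prod.ext_iff] at h ⊢
      exact ⟨h.1, by omega⟩)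

lemma single_apply' (j i : ℕ × ℤ) (v : ℂ) :
    (lp.single 2 j v : H) i = if i = j then v else 0 := by
  rcases eq_or_ne i j with rfl | h
  · simp [lp.single_apply_self]
  · simp [lp.single_apply_ne _ _ _ h, h]

lemma aOp_single (hq1 : ‖q‖ < 1) (n : ℕ) (k : ℤ) :
    aOp hq1 (lp.single 2 (n, k) 1) = ((c q n : ℝ) : ℂ) • lp.single 2 (n - 1, k) 1 := by
  apply lp.ext
  funext i
  obtain ⟨m, l⟩ := i
  simp only [aOp]
  erw [mkOp_apply]
  simp only [lp.coeFn_smul, Pi.smul_apply, smul_eq_mul,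
    single_apply', Prod.mk.injEq]
  rcases n with _ | p
  · simp [c_zero]
  · by_cases hm : m = p
    · subst hm; simp
    · simp [hm]

lemma aAdjOp_single (hq1 : ‖q‖ < 1) (n : ℕ) (k : ℤ) :
    aAdjOp hq1 (lp.single 2 (n, k) 1)
      = ((c q (n + 1) : ℝ) : ℂ) • lp.single 2 (n + 1, k) 1 := by
  apply lp.ext
  funext i
  obtain ⟨m, l⟩ := i
  simp only [aAdjOp]
  erw [mkOp_apply]
  simp only [lp.coeFn_smul, Pi.smul_apply, smul_eq_mul,
    single_apply', Prod.mk.injEq]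
  rcases m with _ | r
  · simp [c_zero]
  · by_cases hr : r = n
    · subst hr; simp
    · simp [hr]

lemma gOp_single (hq1 : ‖q‖ < 1) (n : ℕ) (k : ℤ) :
    gOp hq1 (lp.single 2 (n, k) 1) = (conj q) ^ n • lp.single 2 (n, k + 1) 1 := by
  apply lp.ext
  funext i
  obtain ⟨m, l⟩ := i
  simp only [gOp]
  erw [mkOp_apply]
  simp only [lp.coeFn_smul, Pi.smul_apply, smul_eq_mul,
    single_apply', Prod.mk.injEq]
  by_cases hm : m = n ∧ l = k + 1
  · obtain ⟨rfl, rfl⟩ := hm; simp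
  · have h1 : ¬(m = n ∧ l - 1 = k) := by omega
    simp [hm, h1]

lemma gAdjOp_single (hq1 : ‖q‖ < 1) (n : ℕ) (k : ℤ) :
    gAdjOp hq1 (lp.single 2 (n, k) 1) = q ^ n • lp.single 2 (n, k - 1) 1 := by
  apply lp.ext
  funext i
  obtain ⟨m, l⟩ := i
  simp only [gAdjOp]
  erw [mkOp_apply]
  simp only [lp.coeFn_smul, Pi.smul_apply, smul_eq_mul,
    single_apply', Prod.mk.injEq]
  by_cases hm : m = n ∧ l = k - 1
  · obtain ⟨rfl, rfl⟩ := hm; simp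
  · have h1 : ¬(m = n ∧ l + 1 = k) := by omega
    simp [hm, h1]


open ContinuousLinearMap in
lemma ext_of_single (T S : H →L[ℂ] H)
    (h : ∀ j : ℕ × ℤ, T (lp.single 2 j 1) = S (lp.single 2 j 1)) : T = S := by
  refine ContinuousLinearMap.ext fun x => ?_
  have hx : HasSum (fun j : ℕ × ℤ => lp.single 2 j (x j)) x :=
    lp.hasSum_single ENNReal.ofNat_ne_top x
  have key : ∀ j, T (lp.single 2 j (x j)) = S (lp.single 2 j (x j)) := by
    intro j
    have hj := lp.single_smul (E := fun _ : ℕ × ℤ => ℂ) 2 j (x j) (1:ℂ)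
    rw [smul_eq_mul, mul_one] at hj
    rw [hj, map_smul, map_smul, h j]
  exact (hx.mapL T).unique (by simpa only [key] using hx.mapL S)

lemma inner_eq (f g : H) : (inner ℂ f g : ℂ) = ∑' i, conj (f i) * (g i) :=
  by rw [lp.inner_eq_tsum]; exact tsum_congr fun i => RCLike.inner_apply' _ _

lemma star_aOp (hq1 : ‖q‖ < 1) : star (aOp hq1) = aAdjOp hq1 := by
  rw [ContinuousLinearMap.star_eq_adjoint]
  have : aAdjOp hq1 = ContinuousLinearMap.adjoint (aOp hq1) := by
    rw [ContinuousLinearMap.eq_adjoint_iff]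
    intro x y
    rw [inner_eq, inner_eq]
    have hinj : Function.Injective (fun p : ℕ × ℤ => ((p.1 + 1, p.2) : ℕ × ℤ)) := by
      intro p p' h
      obtain ⟨n, k⟩ := p; obtain ⟨n', k'⟩ := p'
      simpa [Prod.ext_iff] using h
    rw [← Function.Injective.tsum_eq hinj (f := fun p : ℕ × ℤ =>
      conj ((aAdjOp hq1 x) p) * y p) ?_]
    · refine tsum_congr fun p => ?_
      obtain ⟨n, k⟩ := p
      simp only [aAdjOp, aOp]
      erw [mkOp_apply, mkOp_apply]
      simp only [map_mul, Complex.conj_ofReal,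
        Nat.add_sub_cancel]
      ring
    · intro p hp
      obtain ⟨n, k⟩ := p
      rcases n with _ | r
      · exfalso; apply hp; simp only [aAdjOp]; erw [mkOp_apply]; simp [c_zero]
      · exact ⟨(r, k), rfl⟩
  exact this.symm

lemma star_gOp (hq1 : ‖q‖ < 1) : star (gOp hq1) = gAdjOp hq1 := by
  rw [ContinuousLinearMap.star_eq_adjoint]
  have : gAdjOp hq1 = ContinuousLinearMap.adjoint (gOp hq1) := by
    rw [ContinuousLinearMap.eq_adjoint_iff]
    intro x y
    rw [inner_eq, inner_eq]
    let e : (ℕ × ℤ) ≃ (ℕ × ℤ) :=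
      (Equiv.refl ℕ).prodCongr (Equiv.addRight (1 : ℤ))
    rw [← Equiv.tsum_eq e (fun p : ℕ × ℤ => conj (x p) * (gOp hq1 y) p)]
    refine tsum_congr fun p => ?_
    obtain ⟨n, k⟩ := p
    have he : e (n, k) = (n, k + 1) := rfl
    simp only [he, gOp, gAdjOp]
    erw [mkOp_apply, mkOp_apply]
    simp only [map_mul, map_pow,
      Complex.conj_conj, add_sub_cancel_right]
    ring
  exact this.symm


lemma conj_mul_self_pow (q : ℂ) (n : ℕ) :
    (conj q) ^ n * q ^ n = ((‖q‖ : ℝ) : ℂ) ^ (2 * n) := by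
  rw [← mul_pow, mul_comm, Complex.mul_conj, pow_mul]
  norm_cast
  rw [Complex.sq_norm]

lemma rel1 (hq1 : ‖q‖ < 1) :
    star (aOp hq1) * aOp hq1 + star (gOp hq1) * gOp hq1 = 1 := by
  rw [star_aOp, star_gOp]
  apply ext_of_single
  rintro ⟨n, k⟩
  simp only [ContinuousLinearMap.add_apply, ContinuousLinearMap.mul_apply,
    ContinuousLinearMap.one_apply, aOp_single, gOp_single, map_smul,
    aAdjOp_single, gAdjOp_single, add_sub_cancel_right, smul_smul]
  rcases n with _ | m
  · simp [c_zero]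
  · simp only [Nat.add_sub_cancel, ← add_smul]
    have key : ((c q (m + 1) : ℝ) : ℂ) * ((c q (m + 1) : ℝ) : ℂ)
        + (conj q) ^ (m + 1) * q ^ (m + 1) = 1 := by
      rw [conj_mul_self_pow]
      have h2 : ((c q (m + 1) : ℝ) : ℂ) * ((c q (m + 1) : ℝ) : ℂ)
          = (((c q (m + 1)) ^ 2 : ℝ) : ℂ) := by push_cast; ring
      rw [h2, c_sq hq1]
      push_cast
      ring
    rw [key, one_smul]

lemma rel2 (hq1 : ‖q‖ < 1) :
    aOp hq1 * star (aOp hq1)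
      + ((‖q‖ : ℂ) ^ 2) • (star (gOp hq1) * gOp hq1) = 1 := by
  rw [star_aOp, star_gOp]
  apply ext_of_single
  rintro ⟨n, k⟩
  simp only [ContinuousLinearMap.add_apply, ContinuousLinearMap.mul_apply,
    ContinuousLinearMap.one_apply, ContinuousLinearMap.smul_apply, aOp_single,
    gOp_single, map_smul, aAdjOp_single, gAdjOp_single, add_sub_cancel_right,
    Nat.add_sub_cancel, smul_smul]
  rw [← add_smul]
  have key : ((c q (n + 1) : ℝ) : ℂ) * ((c q (n + 1) : ℝ) : ℂ)
      + (‖q‖ : ℂ) ^ 2 * ((conj q) ^ n * q ^ n) = 1 := by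
    rw [conj_mul_self_pow]
    have h2 : ((c q (n + 1) : ℝ) : ℂ) * ((c q (n + 1) : ℝ) : ℂ)
        = (((c q (n + 1)) ^ 2 : ℝ) : ℂ) := by push_cast; ring
    rw [h2, c_sq hq1]
    push_cast
    ring
  rw [key, one_smul]

lemma rel3 (hq1 : ‖q‖ < 1) :
    aOp hq1 * gOp hq1 = conj q • (gOp hq1 * aOp hq1) := by
  apply ext_of_single
  rintro ⟨n, k⟩
  simp only [ContinuousLinearMap.mul_apply, ContinuousLinearMap.smul_apply,
    aOp_single, gOp_single, map_smul, smul_smul]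
  rcases n with _ | m
  · simp [c_zero]
  · simp only [Nat.add_sub_cancel]
    congr 1
    rw [pow_succ]
    ring

lemma rel4 (hq1 : ‖q‖ < 1) :
    gOp hq1 * star (gOp hq1) = star (gOp hq1) * gOp hq1 := by
  rw [star_gOp]
  apply ext_of_single
  rintro ⟨n, k⟩
  simp only [ContinuousLinearMap.mul_apply, gOp_single, gAdjOp_single, map_smul,
    smul_smul, sub_add_cancel, add_sub_cancel_right]
  congr 1
  ring


end SUq15

open scoped ComplexConjugate

theorem stmt15 (q : ℂ) (hq0 : 0 < ‖q‖) (hq1 : ‖q‖ < 1) :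
    (∃ a g : lp (fun _ : ℕ × ℤ => ℂ) 2 →L[ℂ] lp (fun _ : ℕ × ℤ => ℂ) 2,
      (∀ (n : ℕ) (k : ℤ),
        a (lp.single 2 (n + 1, k) 1)
          = ((Real.sqrt (1 - ‖q‖ ^ (2 * (n + 1))) : ℝ) : ℂ) •
              lp.single 2 (n, k) 1) ∧
      (∀ k : ℤ, a (lp.single 2 (0, k) 1) = 0) ∧
      (∀ (n : ℕ) (k : ℤ),
        g (lp.single 2 (n, k) 1) = (conj q) ^ n • lp.single 2 (n, k + 1) 1)) ∧
    (∀ a g : lp (fun _ : ℕ × ℤ => ℂ) 2 →L[ℂ] lp (fun _ : ℕ × ℤ => ℂ) 2,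
      (∀ (n : ℕ) (k : ℤ),
        a (lp.single 2 (n + 1, k) 1)
          = ((Real.sqrt (1 - ‖q‖ ^ (2 * (n + 1))) : ℝ) : ℂ) •
              lp.single 2 (n, k) 1) →
      (∀ k : ℤ, a (lp.single 2 (0, k) 1) = 0) →
      (∀ (n : ℕ) (k : ℤ),
        g (lp.single 2 (n, k) 1) = (conj q) ^ n • lp.single 2 (n, k + 1) 1) →
      (star a * a + star g * g = 1 ∧
       a * star a + ((‖q‖ : ℂ) ^ 2) • (star g * g) = 1 ∧
       a * g = conj q • (g * a) ∧
       g * star g = star g * g)) := by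
  constructor
  · refine ⟨SUq15.aOp hq1, SUq15.gOp hq1, ?_, ?_, ?_⟩
    · intro n k
      have h := SUq15.aOp_single hq1 (n + 1) k
      simpa [SUq15.c, Nat.add_sub_cancel] using h
    · intro k
      have h := SUq15.aOp_single hq1 0 k
      simpa [SUq15.c_zero] using h
    · exact SUq15.gOp_single hq1
  · intro a g ha ha0 hg
    have hA : a = SUq15.aOp hq1 := by
      apply SUq15.ext_of_single
      rintro ⟨n, k⟩
      rcases n with _ | m
      · rw [ha0 k, SUq15.aOp_single hq1 0 k]
        simp [SUq15.c_zero]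
      · rw [ha m k, SUq15.aOp_single hq1 (m + 1) k]
        simp [SUq15.c, Nat.add_sub_cancel]
    have hG : g = SUq15.gOp hq1 := by
      apply SUq15.ext_of_single
      rintro ⟨n, k⟩
      rw [hg n k, SUq15.gOp_single hq1 n k]
    subst hA
    subst hG
    exact ⟨SUq15.rel1 hq1, SUq15.rel2 hq1, SUq15.rel3 hq1, SUq15.rel4 hq1⟩
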